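/- Let $d$ be a monic real polynomial of degree $N$ with distinct roots $\delta_1,\dots,\delta_N$, all in the open left half-plane, and let $a$ be a monic real polynomial of degree $N-1$ with $d(-\delta_i) \neq 0$ for all $i$. Then $\frac{1}{2\pi}\int_{-\infty}^{\infty} \frac{a(-i\omega)\, a(i\omega)}{d(i\omega)\, d(-i\omega)}\, d\omega = \sum_{i=1}^{N} \frac{a(-\delta_i)\, a(\delta_i)}{d'(\delta_i)\, d(-\delta_i)}$. -/

import Mathlib

open Polynomial Complex MeasureTheory Filter Topology


lemma factor_aux (c : ℂ) (x : ℝ) :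
    ((x:ℂ)^2 + c^2) = ((x:ℂ) - I*c) * ((x:ℂ) + I*c) := by
  linear_combination (c^2) * Complex.I_sq

lemma sub_ne_aux (c : ℂ) (hc : c.re ≠ 0) (x : ℝ) : ((x:ℂ) - I*c) ≠ 0 := by
  intro h; have := congrArg Complex.im h; simp at this; exact hc this

lemma add_ne_aux (c : ℂ) (hc : c.re ≠ 0) (x : ℝ) : ((x:ℂ) + I*c) ≠ 0 := by
  intro h; have := congrArg Complex.im h; simp at this; exact hc this

lemma denom_ne_aux (c : ℂ) (hc : c.re ≠ 0) (x : ℝ) : ((x:ℂ)^2 + c^2) ≠ 0 := by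
  rw [factor_aux]; exact mul_ne_zero (sub_ne_aux c hc x) (add_ne_aux c hc x)

-- base real integrable fact
lemma integrable_shift (p q : ℝ) (hp : p ≠ 0) :
    Integrable (fun x : ℝ => ((x + q)^2 + p^2)⁻¹) := by
  have h0 : Integrable (fun y : ℝ => (1 + (y/p)^2)⁻¹) :=
    integrable_inv_one_add_sq.comp_div hp
  have h1 : Integrable (fun y : ℝ => (p^2)⁻¹ * (1 + (y/p)^2)⁻¹) := h0.const_mul _
  have h2 : Integrable (fun y : ℝ => (y^2 + p^2)⁻¹) := by
    refine h1.congr (Eventually.of_forall fun y => ?_)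
    field_simp
    ring
  simpa using h2.comp_add_right q

lemma integrable_aux (c : ℂ) (hc : c.re ≠ 0) :
    Integrable (fun x : ℝ => ((x:ℂ)^2 + c^2)⁻¹) := by
  set p := c.re; set q := c.im
  have hcont : Continuous (fun x : ℝ => ((x:ℂ)^2 + c^2)⁻¹) := by
    refine ContinuousOn.comp_continuous continuousOn_inv₀ (by continuity) ?_
    intro x; exact denom_ne_aux c hc x
  have hg1 := integrable_shift p q hc
  have hg2 := integrable_shift p (-q) hc
  refine Integrable.mono' (((hg1.add hg2).const_mul (2⁻¹))) hcont.aestronglyMeasurable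
    (Eventually.of_forall fun x => ?_)
  have hr : ‖(x:ℂ) - I*c‖^2 = (x + q)^2 + p^2 := by
    rw [Complex.sq_norm, Complex.normSq_apply]
    simp [p, q]; ring
  have hs : ‖(x:ℂ) + I*c‖^2 = (x + -q)^2 + p^2 := by
    rw [Complex.sq_norm, Complex.normSq_apply]
    simp [p, q]; ring
  have hrpos : 0 < ‖(x:ℂ) - I*c‖ := norm_pos_iff.2 (sub_ne_aux c hc x)
  have hspos : 0 < ‖(x:ℂ) + I*c‖ := norm_pos_iff.2 (add_ne_aux c hc x)
  have hnorm : ‖((x:ℂ)^2 + c^2)⁻¹‖ = (‖(x:ℂ) - I*c‖ * ‖(x:ℂ) + I*c‖)⁻¹ := by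
    rw [norm_inv, factor_aux, norm_mul]
  rw [hnorm]
  simp only [Pi.add_apply]
  have h1 : ((x + q)^2 + p^2)⁻¹ = (‖(x:ℂ) - I*c‖^2)⁻¹ := by rw [hr]
  have h2 : ((x + -q)^2 + p^2)⁻¹ = (‖(x:ℂ) + I*c‖^2)⁻¹ := by rw [hs]
  rw [h1, h2]
  set r := ‖(x:ℂ) - I*c‖
  set s := ‖(x:ℂ) + I*c‖
  rw [inv_le_iff_one_le_mul₀ (by positivity)]
  have key : 2 * r * s ≤ r^2 + s^2 := by nlinarith [sq_nonneg (r - s)]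
  rw [show 2⁻¹ * ((r^2)⁻¹ + (s^2)⁻¹) * (r * s) = (r^2+s^2) / (2*r*s) from by
    field_simp; ring]
  rw [le_div_iff₀ (by positivity)]
  linarith

lemma integral_aux (c : ℂ) (hc : c.re < 0) :
    ∫ x : ℝ, ((x:ℂ)^2 + c^2)⁻¹ = -(↑Real.pi/c) := by
  have hcne : c.re ≠ 0 := ne_of_lt hc
  have hc0 : c ≠ 0 := fun h => by simp [h] at hcne
  set F : ℝ → ℂ := fun x =>
    (2*I*c)⁻¹ * (Complex.log ((x:ℂ) - I*c) - Complex.log ((x:ℂ) + I*c)) with hF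
  have h2Ic : (2*I*c) ≠ 0 := by
    simp [Complex.I_ne_zero, hc0]
  have hder : ∀ x : ℝ, HasDerivAt F (((x:ℂ)^2 + c^2)⁻¹) x := by
    intro x
    have hx : HasDerivAt (fun x : ℝ => (x:ℂ)) 1 x := by
      simpa using (hasDerivAt_id x).ofReal_comp
    have h1 : HasDerivAt (fun x : ℝ => (x:ℂ) - I*c) 1 x := hx.sub_const _
    have h2 : HasDerivAt (fun x : ℝ => (x:ℂ) + I*c) 1 x := hx.add_const _
    have hm1 : ((x:ℂ) - I*c) ∈ Complex.slitPlane := Or.inr (by simp [hcne])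
    have hm2 : ((x:ℂ) + I*c) ∈ Complex.slitPlane := Or.inr (by simp [hcne])
    have l1 := h1.clog_real hm1
    have l2 := h2.clog_real hm2
    have hd := ((l1.sub l2).const_mul ((2*I*c)⁻¹))
    refine hd.congr_deriv ?_
    have hs := sub_ne_aux c hcne x
    have ha := add_ne_aux c hcne x
    rw [factor_aux c x]
    field_simp
    ring
  have htop : Tendsto F atTop (𝓝 0) := by
    have hinner : Tendsto (fun x : ℝ => I*c/(x:ℂ)) atTop (𝓝 0) := by
      have h0 : Tendsto (fun x : ℝ => ((x⁻¹ : ℝ) : ℂ)) atTop (𝓝 0) := by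
        simpa [Function.comp_def, Complex.ofReal_inv] using
          (Complex.continuous_ofReal.tendsto 0).comp tendsto_inv_atTop_zero
      have := h0.const_mul (I*c)
      simpa [div_eq_mul_inv, Complex.ofReal_inv] using this
    have t1 : Tendsto (fun x : ℝ => Complex.log (1 - I*c/x)) atTop (𝓝 0) := by
      have h : Tendsto (fun x : ℝ => (1:ℂ) - I*c/x) atTop (𝓝 1) := by
        simpa using (tendsto_const_nhds (x := (1:ℂ))).sub hinner
      simpa using h.clog (by norm_num)
    have t2 : Tendsto (fun x : ℝ => Complex.log (1 + I*c/x)) atTop (𝓝 0) := by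
      have h : Tendsto (fun x : ℝ => (1:ℂ) + I*c/x) atTop (𝓝 1) := by
        simpa using (tendsto_const_nhds (x := (1:ℂ))).add hinner
      simpa using h.clog (by norm_num)
    have hlog := (t1.sub t2).const_mul ((2*I*c)⁻¹)
    rw [sub_zero, mul_zero] at hlog
    refine Tendsto.congr' ?_ hlog
    filter_upwards [eventually_gt_atTop (0:ℝ)] with x hx
    have hxne : ((x:ℂ)) ≠ 0 := Complex.ofReal_ne_zero.2 (ne_of_gt hx)
    have e1 : ((x:ℂ) - I*c) = (x:ℝ) * (1 - I*c/x) := by push_cast; field_simp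
    have e2 : ((x:ℂ) + I*c) = (x:ℝ) * (1 + I*c/x) := by push_cast; field_simp
    have ne1 : (1:ℂ) - I*c/x ≠ 0 := fun h =>
      sub_ne_aux c hcne x (by rw [e1, h, mul_zero])
    have ne2 : (1:ℂ) + I*c/x ≠ 0 := fun h =>
      add_ne_aux c hcne x (by rw [e2, h, mul_zero])
    show _ = (2*I*c)⁻¹ * _
    rw [e1, e2, Complex.log_ofReal_mul hx ne1, Complex.log_ofReal_mul hx ne2]
    ring
  have hbot : Tendsto F atBot (𝓝 (↑Real.pi/c)) := by
    have hinvbot : Tendsto (fun x : ℝ => x⁻¹) atBot (𝓝 0) := by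
      have h1 := tendsto_inv_atTop_zero.comp tendsto_neg_atBot_atTop (α := ℝ)
      have h2 := h1.neg
      simpa [Function.comp_def, inv_neg] using h2
    have hinner : Tendsto (fun x : ℝ => I*c/(x:ℂ)) atBot (𝓝 0) := by
      have h0 : Tendsto (fun x : ℝ => ((x⁻¹ : ℝ) : ℂ)) atBot (𝓝 0) := by
        simpa [Function.comp_def, Complex.ofReal_inv] using (Complex.continuous_ofReal.tendsto 0).comp hinvbot
      have := h0.const_mul (I*c)
      simpa [div_eq_mul_inv, Complex.ofReal_inv] using this
    have himval : ∀ x : ℝ, x ≠ 0 → (I*c/(x:ℂ)).im = c.re / x := by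
      intro x hx
      rw [div_im]
      simp [Complex.normSq_apply]
      field_simp
    have t1 : Tendsto (fun x : ℝ => Complex.log (-1 + I*c/x)) atBot (𝓝 (↑Real.pi*I)) := by
      have base := Complex.tendsto_log_nhdsWithin_im_nonneg_of_re_neg_of_im_zero
        (z := -1) (by norm_num) (by norm_num)
      have hcomp : Tendsto (fun x : ℝ => (-1:ℂ) + I*c/x) atBot (𝓝[{z : ℂ | 0 ≤ z.im}] (-1)) := by
        rw [tendsto_nhdsWithin_iff]
        refine ⟨by simpa using (tendsto_const_nhds (x := (-1:ℂ))).add hinner, ?_⟩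
        filter_upwards [eventually_lt_atBot (0:ℝ)] with x hx
        simp only [Set.mem_setOf_eq, Complex.add_im, Complex.neg_im, Complex.one_im, neg_zero,
          zero_add]
        rw [himval x (ne_of_lt hx)]
        exact le_of_lt (div_pos_of_neg_of_neg hc hx)
      have := base.comp hcomp
      simpa [Function.comp_def] using this
    have t2 : Tendsto (fun x : ℝ => Complex.log (-1 - I*c/x)) atBot (𝓝 (-(↑Real.pi*I))) := by
      have base := Complex.tendsto_log_nhdsWithin_im_neg_of_re_neg_of_im_zero
        (z := -1) (by norm_num) (by norm_num)
      have hcomp : Tendsto (fun x : ℝ => (-1:ℂ) - I*c/x) atBot (𝓝[{z : ℂ | z.im < 0}] (-1)) := by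
        rw [tendsto_nhdsWithin_iff]
        refine ⟨by simpa using (tendsto_const_nhds (x := (-1:ℂ))).sub hinner, ?_⟩
        filter_upwards [eventually_lt_atBot (0:ℝ)] with x hx
        simp only [Set.mem_setOf_eq, Complex.sub_im, Complex.neg_im, Complex.one_im, neg_zero,
          zero_sub]
        rw [himval x (ne_of_lt hx)]
        simpa using div_pos_of_neg_of_neg hc hx
      have := base.comp hcomp
      have habs : ‖(-1:ℂ)‖ = 1 := by simp
      simpa [Function.comp_def, habs, sub_eq_neg_add] using this
    have hlog := (t1.sub t2).const_mul ((2*I*c)⁻¹)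
    have hval : (2*I*c)⁻¹ * ((↑Real.pi*I) - (-(↑Real.pi*I))) = ↑Real.pi/c := by
      rw [inv_mul_eq_div, div_eq_div_iff (by simp [Complex.I_ne_zero, hc0]) hc0]
      ring
    rw [hval] at hlog
    refine Tendsto.congr' ?_ hlog
    filter_upwards [eventually_lt_atBot (0:ℝ)] with x hx
    have hxne : ((x:ℂ)) ≠ 0 := Complex.ofReal_ne_zero.2 (ne_of_lt hx)
    have hmx : (0:ℝ) < -x := by linarith
    have e1 : ((x:ℂ) - I*c) = ((-x : ℝ):ℂ) * (-1 + I*c/x) := by push_cast; field_simp; ring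
    have e2 : ((x:ℂ) + I*c) = ((-x : ℝ):ℂ) * (-1 - I*c/x) := by push_cast; field_simp; ring
    have ne1 : (-1:ℂ) + I*c/x ≠ 0 := fun h =>
      sub_ne_aux c hcne x (by rw [e1, h, mul_zero])
    have ne2 : (-1:ℂ) - I*c/x ≠ 0 := fun h =>
      add_ne_aux c hcne x (by rw [e2, h, mul_zero])
    show _ = (2*I*c)⁻¹ * _
    rw [e1, e2, Complex.log_ofReal_mul hmx ne1, Complex.log_ofReal_mul hmx ne2]
    ring
  have := integral_of_hasDerivAt_of_tendsto hder (integrable_aux c hcne) hbot htop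
  rw [this]
  simp

theorem stmt_19 (N : ℕ) (d a : Polynomial ℝ)
    (hdmonic : d.Monic) (hdd : d.natDegree = N)
    (δ : Fin N → ℂ) (hδ : Function.Injective δ)
    (hroots : ∀ i, (d.map (algebraMap ℝ ℂ)).eval (δ i) = 0)
    (hLHP : ∀ i, (δ i).re < 0)
    (hamonic : a.Monic) (hda : a.natDegree = N - 1)
    (hdnz : ∀ i, (d.map (algebraMap ℝ ℂ)).eval (-δ i) ≠ 0) :
    (1 / (2 * Real.pi)) • ∫ ω : ℝ,
      ((a.map (algebraMap ℝ ℂ)).eval (-(ω * Complex.I))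
        * (a.map (algebraMap ℝ ℂ)).eval (ω * Complex.I)) /
      ((d.map (algebraMap ℝ ℂ)).eval (ω * Complex.I)
        * (d.map (algebraMap ℝ ℂ)).eval (-(ω * Complex.I)))
    = ∑ i : Fin N,
        ((a.map (algebraMap ℝ ℂ)).eval (-δ i) * (a.map (algebraMap ℝ ℂ)).eval (δ i)) /
        ((d.map (algebraMap ℝ ℂ)).derivative.eval (δ i)
          * (d.map (algebraMap ℝ ℂ)).eval (-δ i)) := by
  rcases Nat.eq_zero_or_pos N with hN | hN
  · subst hN
    have hd1 : d = 1 := hdmonic.natDegree_eq_zero.mp hdd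
    have ha1 : a = 1 := hamonic.natDegree_eq_zero.mp (by simpa using hda)
    subst hd1; subst ha1
    simp only [Polynomial.map_one, eval_one, mul_one, one_div, one_mul]
    rw [MeasureTheory.integral_const]
    simp [Measure.real, Real.volume_univ]
  set D := d.map (algebraMap ℝ ℂ) with hDdef
  set A := a.map (algebraMap ℝ ℂ) with hAdef
  have hDmonic : D.Monic := hdmonic.map _
  have hDdeg : D.natDegree = N := by rw [hDdef, hdmonic.natDegree_map]; exact hdd
  have hAmonic : A.Monic := hamonic.map _
  have hAdeg : A.natDegree = N - 1 := by rw [hAdef, hamonic.natDegree_map]; exact hda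
  -- factorization of D
  have hD : D = ∏ i : Fin N, (X - C (δ i)) := by
    have hco : Pairwise (Function.onFun IsCoprime fun i : Fin N => (X : ℂ[X]) - C (δ i)) :=
      Polynomial.pairwise_coprime_X_sub_C hδ
    have hdvd : (∏ i : Fin N, (X - C (δ i))) ∣ D :=
      Fintype.prod_dvd_of_coprime hco fun i => dvd_iff_isRoot.2 (hroots i)
    obtain ⟨u, hu⟩ := hdvd
    have hpm : (∏ i : Fin N, (X - C (δ i))).Monic :=
      monic_prod_of_monic _ _ fun i _ => monic_X_sub_C _
    have hdegp : (∏ i : Fin N, (X - C (δ i))).natDegree = N := by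
      rw [natDegree_prod _ _ fun i _ => X_sub_C_ne_zero (δ i)]
      simp
    have hu0 : u ≠ 0 := by
      rintro rfl
      rw [mul_zero] at hu
      exact hDmonic.ne_zero hu
    have hun : u.natDegree = 0 := by
      have h := hDdeg
      rw [hu, natDegree_mul hpm.ne_zero hu0, hdegp] at h
      omega
    have humonic : u.Monic := hpm.of_mul_monic_left (hu ▸ hDmonic)
    have : u = 1 := humonic.natDegree_eq_zero.mp hun
    rw [hu, this, mul_one]
  have hDeval : ∀ s : ℂ, D.eval s = ∏ i, (s - δ i) := by
    intro s; rw [hD]; simp [eval_prod]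
  -- auxiliary polynomials
  set P : Fin N → ℂ[X] := fun i => ∏ j ∈ Finset.univ.erase i, (X - C (δ j)) with hPdef
  set Rp : Fin N → ℂ[X] := fun i => ∏ j ∈ Finset.univ.erase i, (-X - C (δ j)) with hRdef
  have hPeval : ∀ i (s : ℂ), (P i).eval s = ∏ j ∈ Finset.univ.erase i, (s - δ j) := by
    intro i s; simp [hPdef, eval_prod]
  have hReval : ∀ i (s : ℂ), (Rp i).eval s = ∏ j ∈ Finset.univ.erase i, (-s - δ j) := by
    intro i s; simp [hRdef, eval_prod]
  have hfact : ∀ i, D = (X - C (δ i)) * P i := by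
    intro i
    rw [hD, hPdef, ← Finset.mul_prod_erase _ _ (Finset.mem_univ i)]
  have hderiv : ∀ i, (derivative D).eval (δ i) = (P i).eval (δ i) := by
    intro i
    rw [hfact i, derivative_mul]
    simp
  have hdernz : ∀ i, (derivative D).eval (δ i) ≠ 0 := by
    intro i
    rw [hderiv i, hPeval]
    rw [Finset.prod_ne_zero_iff]
    intro j hj
    exact sub_ne_zero_of_ne (Ne.symm (hδ.ne (Finset.ne_of_mem_erase hj)))
  set Av : Fin N → ℂ := fun i =>
    (A.eval (-δ i) * A.eval (δ i)) / ((derivative D).eval (δ i) * D.eval (-δ i)) with hAv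
  set Q : ℂ[X] := A * A.comp (-X) with hQ
  set Dneg : ℂ[X] := D.comp (-X) with hDneg
  set L : ℂ[X] := ∑ i, C (Av i) * (P i * Dneg + Rp i * D) with hL
  have hDnegeval : ∀ s : ℂ, Dneg.eval s = D.eval (-s) := by
    intro s; simp [hDneg, eval_comp]
  have hQeval : ∀ s : ℂ, Q.eval s = A.eval s * A.eval (-s) := by
    intro s; simp [hQ, eval_comp]
  -- node set
  set T : Finset ℂ := Finset.univ.image δ ∪ Finset.univ.image (fun i => -δ i) with hT
  have hdisj : Disjoint (Finset.univ.image δ) (Finset.univ.image (fun i => -δ i)) := by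
    rw [Finset.disjoint_left]
    rintro z hz1 hz2
    obtain ⟨i, -, rfl⟩ := Finset.mem_image.1 hz1
    obtain ⟨j, -, hj⟩ := Finset.mem_image.1 hz2
    have h1 := hLHP i
    have h2 := hLHP j
    have : (δ i).re = -(δ j).re := by rw [← hj]; simp
    linarith [this]
  have hTcard : T.card = 2 * N := by
    rw [hT, Finset.card_union_of_disjoint hdisj,
      Finset.card_image_of_injective _ hδ,
      Finset.card_image_of_injective _ (fun i j h => hδ (neg_injective h))]
    simp; ring
  -- degree bounds
  have hPdeg : ∀ i, (P i).natDegree ≤ N - 1 := by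
    intro i
    refine (Polynomial.natDegree_prod_le _ _).trans ?_
    calc (∑ j ∈ Finset.univ.erase i, ((X : ℂ[X]) - C (δ j)).natDegree)
        ≤ ∑ j ∈ Finset.univ.erase i, 1 :=
          Finset.sum_le_sum fun j _ => le_of_eq (natDegree_X_sub_C _)
      _ = N - 1 := by simp [Finset.card_erase_of_mem]
  have hRdeg : ∀ i, (Rp i).natDegree ≤ N - 1 := by
    intro i
    refine (Polynomial.natDegree_prod_le _ _).trans ?_
    calc (∑ j ∈ Finset.univ.erase i, ((-X : ℂ[X]) - C (δ j)).natDegree)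
        ≤ ∑ j ∈ Finset.univ.erase i, 1 := by
          refine Finset.sum_le_sum fun j _ => ?_
          have : (-X : ℂ[X]) - C (δ j) = -(X + C (δ j)) := by ring
          rw [this, natDegree_neg, natDegree_X_add_C]
      _ = N - 1 := by simp [Finset.card_erase_of_mem]
  have hDnegdeg : Dneg.natDegree ≤ N := by
    refine natDegree_comp_le.trans ?_
    simp [hDdeg]
  have hQdeg : Q.natDegree < 2 * N := by
    have h1 : (A.comp (-X : ℂ[X])).natDegree ≤ N - 1 :=
      natDegree_comp_le.trans (by simp [hAdeg])
    have h2 := natDegree_mul_le (p := A) (q := A.comp (-X))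
    rw [hQ]
    omega
  have hLdeg : L.natDegree < 2 * N := by
    have hbound : ∀ i ∈ Finset.univ, (C (Av i) * (P i * Dneg + Rp i * D)).natDegree ≤ 2*N - 1 := by
      intro i _
      refine (natDegree_C_mul_le _ _).trans ?_
      refine (natDegree_add_le _ _).trans ?_
      refine max_le ?_ ?_
      · have := natDegree_mul_le (p := P i) (q := Dneg)
        have h1 := hPdeg i
        omega
      · have := natDegree_mul_le (p := Rp i) (q := D)
        have h1 := hRdeg i
        rw [hDdeg] at *
        omega
    have := Polynomial.natDegree_sum_le_of_forall_le Finset.univ _ hbound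
    rw [hL]
    omega
  -- evaluation agreement on T
  have hLeval : ∀ s : ℂ, L.eval s =
      ∑ i, Av i * ((P i).eval s * D.eval (-s) + (Rp i).eval s * D.eval s) := by
    intro s
    rw [hL, eval_finset_sum]
    refine Finset.sum_congr rfl fun i _ => ?_
    rw [eval_mul, eval_C, eval_add, eval_mul, eval_mul, hDnegeval]
  have hkey : ∀ k, Av k * ((∏ j ∈ Finset.univ.erase k, (δ k - δ j)) * D.eval (-δ k))
      = A.eval (-δ k) * A.eval (δ k) := by
    intro k
    have h1 : (∏ j ∈ Finset.univ.erase k, (δ k - δ j)) = (derivative D).eval (δ k) := by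
      rw [hderiv k, hPeval]
    rw [h1, hAv]
    have h2 := hdernz k
    have h3 := hdnz k
    field_simp
  have hevalT : ∀ z ∈ T, Q.eval z = L.eval z := by
    intro z hz
    rw [hT, Finset.mem_union] at hz
    rcases hz with hz | hz
    · obtain ⟨k, -, rfl⟩ := Finset.mem_image.1 hz
      rw [hQeval, hLeval, Finset.sum_eq_single k]
      · rw [hroots k, mul_zero, add_zero, hPeval, hkey k]
        ring
      · intro i _ hik
        have hz0 : (P i).eval (δ k) = 0 := by
          rw [hPeval]
          exact Finset.prod_eq_zero
            (Finset.mem_erase.2 ⟨Ne.symm hik, Finset.mem_univ k⟩) (sub_self _)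
        rw [hroots k, mul_zero, add_zero, hz0, zero_mul, mul_zero]
      · intro h; exact absurd (Finset.mem_univ k) h
    · obtain ⟨k, -, rfl⟩ := Finset.mem_image.1 hz
      rw [hQeval, hLeval, Finset.sum_eq_single k]
      · rw [neg_neg, hroots k, mul_zero, zero_add, hReval, neg_neg, hkey k]
      · intro i _ hik
        have hz0 : (Rp i).eval (-δ k) = 0 := by
          rw [hReval, neg_neg]
          exact Finset.prod_eq_zero
            (Finset.mem_erase.2 ⟨Ne.symm hik, Finset.mem_univ k⟩) (sub_self _)
        rw [neg_neg, hroots k, mul_zero, zero_add, hz0, zero_mul, mul_zero]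
      · intro h; exact absurd (Finset.mem_univ k) h
  -- the polynomial identity
  have hQL : Q = L := by
    refine Polynomial.eq_of_degrees_lt_of_eval_finset_eq T ?_ ?_ hevalT
    · refine lt_of_le_of_lt Polynomial.degree_le_natDegree ?_
      rw [hTcard]
      exact_mod_cast hQdeg
    · refine lt_of_le_of_lt Polynomial.degree_le_natDegree ?_
      rw [hTcard]
      exact_mod_cast hLdeg
  -- pointwise partial fraction identity on the imaginary axis
  have hpoint : ∀ ω : ℝ,
      (A.eval (-(↑ω * I)) * A.eval (↑ω * I)) / (D.eval (↑ω * I) * D.eval (-(↑ω * I)))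
      = ∑ i, Av i * (-2 * δ i) * (((ω:ℂ)^2 + (δ i)^2)⁻¹) := by
    intro ω
    set s : ℂ := (ω:ℂ) * I with hs
    have hsub_ne : ∀ i, s - δ i ≠ 0 := by
      intro i h
      have := congrArg Complex.re h
      simp [hs] at this
      exact absurd this (ne_of_lt (hLHP i))
    have hnsub_ne : ∀ i, -s - δ i ≠ 0 := by
      intro i h
      have := congrArg Complex.re h
      simp [hs] at this
      exact absurd this (ne_of_lt (hLHP i))
    have hDs : D.eval s ≠ 0 := by
      rw [hDeval, Finset.prod_ne_zero_iff]
      exact fun i _ => hsub_ne i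
    have hDns : D.eval (-s) ≠ 0 := by
      rw [hDeval, Finset.prod_ne_zero_iff]
      exact fun i _ => hnsub_ne i
    have hQLs : A.eval s * A.eval (-s)
        = ∑ i, Av i * ((P i).eval s * D.eval (-s) + (Rp i).eval s * D.eval s) := by
      rw [← hQeval, hQL, hLeval]
    rw [show A.eval (-s) * A.eval s = A.eval s * A.eval (-s) by ring, hQLs, Finset.sum_div]
    refine Finset.sum_congr rfl fun i _ => ?_
    have e1 : D.eval s = (s - δ i) * (P i).eval s := by
      rw [hfact i, eval_mul]; simp
    have e2 : D.eval (-s) = (-s - δ i) * (Rp i).eval s := by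
      rw [hDeval, hReval, ← Finset.mul_prod_erase _ _ (Finset.mem_univ i)]
    have hPne : (P i).eval s ≠ 0 := fun h => hDs (by rw [e1, h, mul_zero])
    have hRne : (Rp i).eval s ≠ 0 := fun h => hDns (by rw [e2, h, mul_zero])
    have hw : (s - δ i) * (-s - δ i) = ((ω:ℂ)^2 + (δ i)^2) := by
      rw [hs]
      linear_combination (-(ω:ℂ)^2) * Complex.I_sq
    rw [e1, e2, ← hw]
    have h1 := hsub_ne i
    have h2 := hnsub_ne i
    field_simp
    ring
  -- now compute the integral
  have hfun : (fun ω : ℝ =>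
      (A.eval (-(↑ω * I)) * A.eval (↑ω * I)) / (D.eval (↑ω * I) * D.eval (-(↑ω * I))))
      = fun ω : ℝ => ∑ i, Av i * (-2 * δ i) * (((ω:ℂ)^2 + (δ i)^2)⁻¹) :=
    funext hpoint
  rw [hfun]
  rw [MeasureTheory.integral_finset_sum _
    (fun i _ => (integrable_aux (δ i) (ne_of_lt (hLHP i))).const_mul (Av i * (-2 * δ i)))]
  have hsum : ∀ i : Fin N, ∫ ω : ℝ, Av i * (-2 * δ i) * (((ω:ℂ)^2 + (δ i)^2)⁻¹)
      = ((2*Real.pi : ℝ) : ℂ) * Av i := by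
    intro i
    rw [MeasureTheory.integral_const_mul, integral_aux (δ i) (hLHP i)]
    have hδ0 : δ i ≠ 0 := fun h => by
      have := hLHP i; rw [h] at this; simp at this
    field_simp
    push_cast; ring
  rw [Finset.sum_congr rfl fun i _ => hsum i, ← Finset.mul_sum]
  rw [Complex.real_smul, ← mul_assoc, ← Complex.ofReal_mul]
  have : (1 / (2 * Real.pi)) * (2 * Real.pi) = 1 := by
    field_simp
  rw [this, Complex.ofReal_one, one_mul]
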